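/- Let G = (V, E) be a finite simple graph, E1 ⊆ E, and let G' be obtained from G by subdividing each edge of E1 twice. If every vertex cover of G has size at least m, then every vertex cover of G' has size at least m + |E1|. -/

import Mathlib

open SimpleGraph Finset

/-- The type of new vertices added when each edge of `E1` is subdivided twice:
for an edge `e = {u, v} ∈ E1`, the ordered pair `(u, v)` represents the new vertex
`v'_{e,u}` (the one adjacent to `u`), and `(v, u)` represents `v'_{e,v}`. -/
abbrev NewVert (V : Type*) (E1 : Finset (Sym2 V)) : Type _ :=
  {p : V × V // s(p.1, p.2) ∈ E1 ∧ p.1 ≠ p.2}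

/-- The graph `G'` obtained from `G` by subdividing each edge of `E1` twice:
an edge `e = {u, v} ∈ E1` is replaced by the path `u — v'_{e,u} — v'_{e,v} — v`,
and edges not in `E1` are kept unchanged. -/
def subdivide {V : Type*} (G : SimpleGraph V) (E1 : Finset (Sym2 V)) :
    SimpleGraph (V ⊕ NewVert V E1) where
  Adj x y :=
    match x, y with
    | Sum.inl u, Sum.inl w => G.Adj u w ∧ s(u, w) ∉ E1
    | Sum.inl u, Sum.inr p => u = p.val.1
    | Sum.inr p, Sum.inl u => u = p.val.1
    | Sum.inr p, Sum.inr q => p.val.1 = q.val.2 ∧ p.val.2 = q.val.1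
  symm := ⟨by
    rintro (u | p) (w | q) h
    · exact ⟨h.1.symm, fun hc => h.2 (by rwa [Sym2.eq_swap] at hc)⟩
    · exact h
    · exact h
    · exact ⟨h.2.symm, h.1.symm⟩⟩
  loopless := ⟨by
    rintro (u | p) h
    · exact G.irrefl h.1
    · exact p.prop.2 h.1⟩

/-- A set `S` of vertices is a vertex cover of `G` if every edge of `G` has at
least one endpoint in `S`. -/
def IsVertexCover {W : Type*} (H : SimpleGraph W) (S : Set W) : Prop :=
  ∀ ⦃u v : W⦄, H.Adj u v → u ∈ S ∨ v ∈ S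

/-- If every vertex cover of `G` has size at least `m`, then every vertex
cover of the graph `G'` obtained from `G` by subdividing each edge of `E1 ⊆ E(G)` twice
has size at least `m + |E1|`. -/
theorem statement4 {V : Type*} [Fintype V] [DecidableEq V] (G : SimpleGraph V)
    [DecidableRel G.Adj] (E1 : Finset (Sym2 V)) (hE1 : E1 ⊆ G.edgeFinset) (m : ℕ)
    (hlb : ∀ S : Finset V, _root_.IsVertexCover G ↑S → m ≤ S.card) :
    ∀ S' : Finset (V ⊕ NewVert V E1),
      _root_.IsVertexCover (subdivide G E1) ↑S' → m + E1.card ≤ S'.card := by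
  classical
  intro S' hS'
  -- the "old" vertices of the cover
  set SV : Finset V := S'.filterMap Sum.getLeft? (by
    rintro (a | a) b b' h h' <;> simp_all) with hSVdef
  -- the "new" vertices of the cover
  set SN : Finset (NewVert V E1) := S'.filterMap Sum.getRight? (by
    rintro (a | a) b b' h h' <;> simp_all) with hSNdef
  have hmemV : ∀ u : V, u ∈ SV ↔ Sum.inl u ∈ S' := by
    intro u
    constructor
    · intro h
      rw [hSVdef, Finset.mem_filterMap] at h
      obtain ⟨(a | a), ha, h⟩ := h <;> simp_all
    · intro h
      rw [hSVdef, Finset.mem_filterMap]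
      exact ⟨Sum.inl u, h, rfl⟩
  have hmemN : ∀ p : NewVert V E1, p ∈ SN ↔ Sum.inr p ∈ S' := by
    intro p
    constructor
    · intro h
      rw [hSNdef, Finset.mem_filterMap] at h
      obtain ⟨(a | a), ha, h⟩ := h <;> simp_all
    · intro h
      rw [hSNdef, Finset.mem_filterMap]
      exact ⟨Sum.inr p, h, rfl⟩
  -- edges of E1 not covered by SV
  set T : Finset (Sym2 V) := E1.filter (fun e => ∀ v ∈ e, Sum.inl v ∉ S') with hTdef
  have hTsub : T ⊆ E1 := Finset.filter_subset _ _
  -- a choice of endpoint for an edge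
  set g : Sym2 V → V := fun e => (Quot.out e).1 with hgdef
  have hg : ∀ e : Sym2 V, g e ∈ e := fun e => Sym2.out_fst_mem e
  -- the candidate cover of G
  set S : Finset V := SV ∪ T.image g with hSdef
  have hcover : _root_.IsVertexCover G ↑S := by
    intro u v huv
    by_cases h1 : s(u, v) ∈ E1
    · by_cases h2 : Sum.inl u ∈ S' ∨ Sum.inl v ∈ S'
      · rcases h2 with h2 | h2
        · exact Or.inl (Finset.mem_union_left _ ((hmemV u).2 h2))
        · exact Or.inr (Finset.mem_union_left _ ((hmemV v).2 h2))
      · push_neg at h2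
        have hT : s(u, v) ∈ T := by
          rw [hTdef, Finset.mem_filter]
          refine ⟨h1, fun w hw => ?_⟩
          rw [Sym2.mem_iff] at hw
          rcases hw with rfl | rfl
          · exact h2.1
          · exact h2.2
        have hge := hg s(u, v)
        rw [Sym2.mem_iff] at hge
        rcases hge with hge | hge
        · exact Or.inl (Finset.mem_union_right _ (hge ▸ Finset.mem_image_of_mem g hT))
        · exact Or.inr (Finset.mem_union_right _ (hge ▸ Finset.mem_image_of_mem g hT))
    · have : (subdivide G E1).Adj (Sum.inl u) (Sum.inl v) := ⟨huv, h1⟩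
      rcases hS' this with h | h
      · exact Or.inl (Finset.mem_union_left _ ((hmemV u).2 h))
      · exact Or.inr (Finset.mem_union_left _ ((hmemV v).2 h))
  have hScard : m ≤ SV.card + T.card :=
    le_trans (hlb S hcover) (le_trans (Finset.card_union_le _ _)
      (by gcongr; exact Finset.card_image_le))
  -- fiberwise counting of the new vertices in the cover
  have hfib : SN.card = ∑ e ∈ E1, (SN.filter (fun p => s(p.val.1, p.val.2) = e)).card :=
    Finset.card_eq_sum_card_fiberwise (fun p _ => p.prop.1)
  have hkey : ∀ e ∈ E1, (if e ∈ T then 2 else 1) ≤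
      (SN.filter (fun p => s(p.val.1, p.val.2) = e)).card := by
    intro e he
    induction e using Sym2.ind with
    | _ u v =>
      have hne : u ≠ v := by
        have := hE1 he
        rw [SimpleGraph.mem_edgeFinset, SimpleGraph.mem_edgeSet] at this
        exact this.ne
      set p1 : NewVert V E1 := ⟨(u, v), he, hne⟩ with hp1
      set p2 : NewVert V E1 := ⟨(v, u), by rwa [Sym2.eq_swap], hne.symm⟩ with hp2
      have hadj : (subdivide G E1).Adj (Sum.inr p1) (Sum.inr p2) := ⟨rfl, rfl⟩
      by_cases hT : s(u, v) ∈ T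
      · -- neither endpoint is in S', so both new vertices must be
        have hu : Sum.inl u ∉ S' := by
          rw [hTdef, Finset.mem_filter] at hT
          exact hT.2 u (Sym2.mem_mk_left u v)
        have hv : Sum.inl v ∉ S' := by
          rw [hTdef, Finset.mem_filter] at hT
          exact hT.2 v (Sym2.mem_mk_right u v)
        have h1 : Sum.inr p1 ∈ S' := by
          have : (subdivide G E1).Adj (Sum.inl u) (Sum.inr p1) := rfl
          rcases hS' this with h | h
          · exact absurd h hu
          · exact h
        have h2 : Sum.inr p2 ∈ S' := by
          have : (subdivide G E1).Adj (Sum.inr p2) (Sum.inl v) := rfl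
          rcases hS' this with h | h
          · exact h
          · exact absurd h hv
        have hsub : ({p1, p2} : Finset (NewVert V E1)) ⊆
            SN.filter (fun p => s(p.val.1, p.val.2) = s(u, v)) := by
          intro x hx
          rw [Finset.mem_insert, Finset.mem_singleton] at hx
          rcases hx with rfl | rfl
          · exact Finset.mem_filter.2 ⟨(hmemN p1).2 h1, rfl⟩
          · exact Finset.mem_filter.2 ⟨(hmemN p2).2 h2, Sym2.eq_swap⟩
        have hcard2 : ({p1, p2} : Finset (NewVert V E1)).card = 2 := by
          rw [Finset.card_insert_of_notMem, Finset.card_singleton]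
          simp only [Finset.mem_singleton, hp1, hp2]
          intro h
          exact hne (congrArg (fun q => q.val.1) h)
        rw [if_pos hT]
        calc (2 : ℕ) = ({p1, p2} : Finset (NewVert V E1)).card := hcard2.symm
          _ ≤ _ := Finset.card_le_card hsub
      · -- the middle edge forces one new vertex in the cover
        rw [if_neg hT]
        have hone : ∃ p, p ∈ SN.filter (fun p => s(p.val.1, p.val.2) = s(u, v)) := by
          rcases hS' hadj with h | h
          · exact ⟨p1, Finset.mem_filter.2 ⟨(hmemN p1).2 h, rfl⟩⟩
          · exact ⟨p2, Finset.mem_filter.2 ⟨(hmemN p2).2 h, Sym2.eq_swap⟩⟩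
        exact Finset.card_pos.2 hone
  have hSNcard : E1.card + T.card ≤ SN.card := by
    rw [hfib]
    calc E1.card + T.card
        = ∑ e ∈ E1, 1 + ∑ e ∈ E1, (if e ∈ T then 1 else 0) := by
          have h1 : ∑ e ∈ E1, (1 : ℕ) = E1.card := by simp
          have h2 : ∑ e ∈ E1, (if e ∈ T then (1 : ℕ) else 0) = T.card := by
            rw [← Finset.sum_filter, Finset.filter_mem_eq_inter,
              Finset.inter_eq_right.2 hTsub]
            simp
          rw [h1, h2]
      _ = ∑ e ∈ E1, ((if e ∈ T then 1 else 0) + 1) := by rw [← Finset.sum_add_distrib]; congr 1; ext e; ring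
      _ = ∑ e ∈ E1, (if e ∈ T then 2 else 1) := by
          congr 1; ext e; by_cases h : e ∈ T <;> simp [h]
      _ ≤ _ := Finset.sum_le_sum hkey
  -- the two halves of the cover have disjoint images in S'
  have hsplit : SV.card + SN.card ≤ S'.card := by
    have hsub : SV.image Sum.inl ∪ SN.image Sum.inr ⊆ S' := by
      intro x hx
      rw [Finset.mem_union] at hx
      rcases hx with hx | hx
      · obtain ⟨u, hu, rfl⟩ := Finset.mem_image.1 hx
        exact (hmemV u).1 hu
      · obtain ⟨p, hp, rfl⟩ := Finset.mem_image.1 hx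
        exact (hmemN p).1 hp
    have hdisj : Disjoint (SV.image Sum.inl) (SN.image Sum.inr) := by
      rw [Finset.disjoint_left]
      intro x hx hx'
      obtain ⟨u, _, rfl⟩ := Finset.mem_image.1 hx
      obtain ⟨p, _, h⟩ := Finset.mem_image.1 hx'
      exact Sum.inl_ne_inr h.symm
    calc SV.card + SN.card
        = (SV.image Sum.inl).card + (SN.image Sum.inr).card := by
          rw [Finset.card_image_of_injective _ Sum.inl_injective,
            Finset.card_image_of_injective _ Sum.inr_injective]
      _ = (SV.image Sum.inl ∪ SN.image Sum.inr).card := (Finset.card_union_of_disjoint hdisj).symm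
      _ ≤ S'.card := Finset.card_le_card hsub
  calc m + E1.card ≤ (SV.card + T.card) + E1.card := by gcongr
    _ = SV.card + (E1.card + T.card) := by ring
    _ ≤ SV.card + SN.card := by gcongr
    _ ≤ S'.card := hsplit
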